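/- Let ℓ = ∞, and let ξ : (0,∞) → V be locally absolutely continuous with ξ ∈ L²_ν((0,∞);V) and derivative ξ' ∈ L²_ν((0,∞);V). Then lim_{τ→∞} ξ(τ) = 0 in V. -/

import Mathlib

open MeasureTheory Set Filter

/-- Case `ℓ = ∞`, `Ω = (0,∞)`. If `ξ` is locally absolutely continuous
on `(0,∞)` with `ξ ∈ L²_ν` and derivative `ξ' ∈ L²_ν` (where `ν = 1/μ`), then
`ξ(τ) → 0` in `V` as `τ → ∞`. -/
theorem stmt2
    {V : Type*} [NormedAddCommGroup V] [InnerProductSpace ℝ V] [CompleteSpace V]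
    (μ : ℝ → ℝ)
    (hμpos : ∀ s ∈ Ioi (0:ℝ), 0 < μ s)
    (hμmono : AntitoneOn μ (Ioi 0))
    (hμint : IntegrableOn μ (Ioi 0))
    (ξ ξ' : ℝ → V)
    (hξ'loc : ∀ a b : ℝ, 0 < a → IntegrableOn ξ' (Icc a b))
    (hFTC : ∀ a b : ℝ, 0 < a → a ≤ b → ξ b = ξ a + ∫ s in a..b, ξ' s)
    (hξL2 : IntegrableOn (fun s => (μ s)⁻¹ * ‖ξ s‖ ^ 2) (Ioi 0))
    (hξ'L2 : IntegrableOn (fun s => (μ s)⁻¹ * ‖ξ' s‖ ^ 2) (Ioi 0)) :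
    Tendsto ξ atTop (nhds (0 : V)) := by
  set h : ℝ → ℝ := fun s => (μ s)⁻¹ * ‖ξ' s‖ ^ 2 + μ s with hh
  have hInt : IntegrableOn h (Ioi 0) := hξ'L2.add hμint
  have hpos : ∀ s ∈ Ioi (0:ℝ), 0 ≤ h s := by
    intro s hs
    have := hμpos s hs
    have : 0 < (μ s)⁻¹ := inv_pos.mpr this
    simp only [hh]
    positivity
  have hbound : ∀ s ∈ Ioi (0:ℝ), ‖ξ' s‖ ≤ h s / 2 := by
    intro s hs
    have ht : 0 < μ s := hμpos s hs
    have key : (μ s)⁻¹ * ‖ξ' s‖ ^ 2 * μ s = ‖ξ' s‖ ^ 2 := by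
      field_simp
    simp only [hh]
    nlinarith [sq_nonneg (‖ξ' s‖ - μ s), norm_nonneg (ξ' s)]
  -- key estimate
  have key : ∀ N a b : ℝ, 1 ≤ N → N ≤ a → a ≤ b →
      ‖ξ b - ξ a‖ ≤ (∫ s in Ioi N, h s) / 2 := by
    intro N a b hN hNa hab
    have hN0 : (0:ℝ) < N := lt_of_lt_of_le one_pos hN
    have ha0 : (0:ℝ) < a := lt_of_lt_of_le hN0 hNa
    have hIcc : Icc a b ⊆ Ioi (0:ℝ) := fun x hx => lt_of_lt_of_le ha0 hx.1
    have hi1 : IntervalIntegrable (fun s => ‖ξ' s‖) volume a b := by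
      apply IntegrableOn.intervalIntegrable
      rw [uIcc_of_le hab]
      exact (hξ'loc a b ha0).norm
    have hi2 : IntervalIntegrable (fun s => h s / 2) volume a b := by
      apply IntegrableOn.intervalIntegrable
      rw [uIcc_of_le hab]
      exact (hInt.mono_set hIcc).div_const 2
    have hIoiN : IntegrableOn h (Ioi N) := hInt.mono_set (Ioi_subset_Ioi hN0.le)
    have h0 : 0 ≤ᵐ[volume.restrict (Ioi N)] h :=
      (ae_restrict_iff' measurableSet_Ioi).2
        (ae_of_all _ fun s hs => hpos s (lt_trans hN0 hs))
    calc ‖ξ b - ξ a‖ = ‖∫ s in a..b, ξ' s‖ := by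
          rw [hFTC a b ha0 hab]; simp
      _ ≤ ∫ s in a..b, ‖ξ' s‖ := intervalIntegral.norm_integral_le_integral_norm hab
      _ ≤ ∫ s in a..b, h s / 2 := by
          apply intervalIntegral.integral_mono_on hab hi1 hi2
          intro s hs
          exact hbound s (hIcc hs)
      _ = (∫ s in Ioc a b, h s) / 2 := by
          rw [intervalIntegral.integral_of_le hab, integral_div]
      _ ≤ (∫ s in Ioi N, h s) / 2 := by
          have hmono : (∫ s in Ioc a b, h s) ≤ ∫ s in Ioi N, h s := by
            apply setIntegral_mono_set hIoiN h0
            exact (Ioc_subset_Ioi_self.trans (Ioi_subset_Ioi hNa)).eventuallyLE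
          linarith
  have hInt1 : IntegrableOn h (Ioi 1) := hInt.mono_set (Ioi_subset_Ioi one_pos.le)
  -- tail integral tends to zero
  have htail : Tendsto (fun a => ∫ s in Ioi a, h s) atTop (nhds 0) := by
    have h1 := MeasureTheory.intervalIntegral_tendsto_integral_Ioi 1 hInt1 tendsto_id
    have heq : ∀ᶠ a in atTop,
        (∫ s in Ioi 1, h s) - (∫ s in (1:ℝ)..a, h s) = ∫ s in Ioi a, h s := by
      filter_upwards [eventually_ge_atTop (1:ℝ)] with a ha
      rw [intervalIntegral.integral_of_le ha]
      have hsplit : (∫ s in Ioc 1 a, h s) + ∫ s in Ioi a, h s = ∫ s in Ioi 1, h s := by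
        rw [← setIntegral_union (Ioc_disjoint_Ioi le_rfl) measurableSet_Ioi
            (hInt1.mono_set Ioc_subset_Ioi_self)
            (hInt.mono_set (Ioi_subset_Ioi (lt_of_lt_of_le one_pos ha).le)),
          Ioc_union_Ioi_eq_Ioi ha]
      linarith
    have h2 : Tendsto (fun a => (∫ s in Ioi 1, h s) - ∫ s in (1:ℝ)..a, h s) atTop
        (nhds ((∫ s in Ioi (1:ℝ), h s) - ∫ s in Ioi (1:ℝ), h s)) := tendsto_const_nhds.sub h1
    rw [sub_self] at h2
    exact Tendsto.congr' heq h2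
  have hGnonneg : ∀ N : ℝ, 1 ≤ N → 0 ≤ ∫ s in Ioi N, h s := by
    intro N hN
    apply setIntegral_nonneg measurableSet_Ioi
    intro s hs
    exact hpos s (lt_trans (lt_of_lt_of_le one_pos hN) hs)
  -- Cauchy
  have hcauchy : Cauchy (map ξ atTop) := by
    rw [Metric.cauchy_iff]
    constructor
    · exact map_neBot
    · intro ε hε
      have hev : ∀ᶠ N in atTop, (∫ s in Ioi N, h s) < ε := htail.eventually (gt_mem_nhds hε)
      obtain ⟨N, hN1, hNε⟩ := ((eventually_ge_atTop (1:ℝ)).and hev).exists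
      refine ⟨ξ '' Ici N, image_mem_map (Ici_mem_atTop N), ?_⟩
      rintro x ⟨u, hu, rfl⟩ y ⟨v, hv, rfl⟩
      have hdist : ∀ p q : ℝ, N ≤ p → p ≤ q → dist (ξ q) (ξ p) < ε := by
        intro p q hp hpq
        rw [dist_eq_norm]
        have := key N p q hN1 hp hpq
        have h0 := hGnonneg N hN1
        linarith
      rcases le_total u v with huv | hvu
      · rw [dist_comm]; exact hdist u v hu huv
      · exact hdist v u hv hvu
  obtain ⟨L, hL⟩ := CompleteSpace.complete hcauchy
  have hlim : Tendsto ξ atTop (nhds L) := hL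
  -- ξ is continuous on [1, ∞)
  have hcont : ContinuousOn ξ (Ici 1) := by
    intro τ hτ
    have hb : τ < τ + 1 := lt_add_one τ
    have hC : ContinuousOn (fun x => ξ 1 + ∫ t in Ioc 1 x, ξ' t) (Icc 1 (τ + 1)) :=
      continuousOn_const.add (intervalIntegral.continuousOn_primitive (hξ'loc 1 (τ + 1) one_pos))
    have heq : EqOn ξ (fun x => ξ 1 + ∫ t in Ioc 1 x, ξ' t) (Icc 1 (τ + 1)) := by
      intro x hx
      rw [hFTC 1 x one_pos hx.1, intervalIntegral.integral_of_le hx.1]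
    have hCc : ContinuousWithinAt ξ (Icc 1 (τ + 1)) τ :=
      (hC.congr heq) τ ⟨hτ, hb.le⟩
    apply hCc.mono_of_mem_nhdsWithin
    rw [mem_nhdsWithin]
    exact ⟨Iio (τ + 1), isOpen_Iio, hb, fun x hx => ⟨hx.2, hx.1.le⟩⟩
  -- ‖ξ‖² is integrable on (1, ∞)
  have hμ1 : 0 < μ 1 := hμpos 1 (by norm_num)
  have hmeas : AEStronglyMeasurable (fun s => ‖ξ s‖ ^ 2) (volume.restrict (Ioi 1)) := by
    have h1 : AEStronglyMeasurable ξ (volume.restrict (Ioi 1)) :=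
      (hcont.aestronglyMeasurable measurableSet_Ici).mono_measure
        (Measure.restrict_mono Ioi_subset_Ici_self le_rfl)
    exact (h1.norm.aemeasurable.pow_const 2).aestronglyMeasurable
  have hξsq : IntegrableOn (fun s => ‖ξ s‖ ^ 2) (Ioi 1) := by
    apply Integrable.mono' ((hξL2.mono_set (Ioi_subset_Ioi one_pos.le)).const_mul (μ 1)) hmeas
    apply (ae_restrict_iff' measurableSet_Ioi).2
    apply ae_of_all
    intro s hs
    have hs0 : (0:ℝ) < s := lt_trans one_pos hs
    have hμs : 0 < μ s := hμpos s (mem_Ioi.2 hs0)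
    have hμle : μ s ≤ μ 1 := hμmono (mem_Ioi.2 one_pos) (mem_Ioi.2 hs0) (le_of_lt hs)
    have hk : (μ s) * ((μ s)⁻¹ * ‖ξ s‖ ^ 2) = ‖ξ s‖ ^ 2 := by field_simp
    rw [Real.norm_of_nonneg (by positivity)]
    nlinarith [sq_nonneg (‖ξ s‖), inv_pos.mpr hμs, mul_nonneg (inv_pos.mpr hμs).le (sq_nonneg ‖ξ s‖)]
  -- the limit is zero
  have hL0 : L = 0 := by
    by_contra hne
    have hnorm : Tendsto (fun τ => ‖ξ τ‖ ^ 2) atTop (nhds (‖L‖ ^ 2)) := (hlim.norm.pow 2)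
    have hc : 0 < ‖L‖ ^ 2 := pow_pos (norm_pos_iff.2 hne) 2
    have hev : ∀ᶠ τ in atTop, ‖L‖ ^ 2 / 2 ≤ ‖ξ τ‖ ^ 2 :=
      hnorm.eventually (eventually_ge_nhds (show ‖L‖ ^ 2 / 2 < ‖L‖ ^ 2 by linarith))
    obtain ⟨N, hN⟩ := eventually_atTop.1 (hev.and (eventually_ge_atTop (1:ℝ)))
    set M := max N 1 with hM
    have hMIoi : Ioi M ⊆ Ioi (1:ℝ) := Ioi_subset_Ioi (le_max_right N 1)
    have hint : IntegrableOn (fun s => ‖ξ s‖ ^ 2) (Ioi M) := hξsq.mono_set hMIoi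
    have hfin : (∫⁻ s in Ioi M, ‖‖ξ s‖ ^ 2‖₊) < ⊤ := hint.2
    have hinf : (⊤ : ENNReal) ≤ ∫⁻ s in Ioi M, ‖‖ξ s‖ ^ 2‖₊ := by
      have hmono : ∫⁻ s in Ioi M, ENNReal.ofReal (‖L‖ ^ 2 / 2) ≤
          ∫⁻ s in Ioi M, ‖‖ξ s‖ ^ 2‖₊ := by
        apply lintegral_mono_ae
        apply (ae_restrict_iff' measurableSet_Ioi).2
        apply ae_of_all
        intro s hs
        have hsN : N ≤ s := le_trans (le_max_left N 1) (le_of_lt hs)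
        have h1 := (hN s hsN).1
        rw [← enorm_eq_nnnorm, Real.enorm_eq_ofReal (by positivity)]
        exact ENNReal.ofReal_le_ofReal h1
      have hvol : volume (Ioi M) = ⊤ := Real.volume_Ioi
      rw [lintegral_const, Measure.restrict_apply MeasurableSet.univ, univ_inter, hvol,
        ENNReal.mul_top (by simp [ENNReal.ofReal_eq_zero]; linarith)] at hmono
      exact hmono
    exact hfin.not_ge hinf
  rwa [hL0] at hlim
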